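/- arXiv:1808.07558 — 2 statements merged into one kernel-verified Lean document; each statement's English description precedes it below -/
import Mathlib

section
/- Let L be a 2-dimensional linear subspace of ℝ^d and let x, z ∈ ℝ^d and y ∈ L with y ≠ 0. If the segment [0, x|_L] intersects the translated segment y + [0, z|_L] in L, then [0, x|_L] does not intersect the reflected translate -y + [0, z|_L], unless 0 lies on both; in particular, for fixed x and z, the set of y ∈ L for which the segments intersect and the set for which the reflected segments intersect have disjoint interiors, so each occupies at most half of any origin-symmetric region of L. -/
open Set

private lemma smul_mem_seg {E : Type*} [AddCommGroup E] [Module ℝ E] {t : ℝ}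
    (h0 : 0 ≤ t) (h1 : t ≤ 1) (v : E) : t • v ∈ segment ℝ (0 : E) v :=
  ⟨1 - t, t, by linarith, h0, by ring, by simp⟩

private lemma mem_seg_iff {E : Type*} [AddCommGroup E] [Module ℝ E] {p v : E}
    (h : p ∈ segment ℝ (0 : E) v) : ∃ t : ℝ, 0 ≤ t ∧ t ≤ 1 ∧ p = t • v := by
  obtain ⟨a, b, ha, hb, hab, h⟩ := h
  exact ⟨b, hb, by linarith, by rw [← h]; simp⟩

/-- Let `L` be a 2-dimensional linear subspace of `ℝ^d`, `x z ∈ ℝ^d`, and `y ∈ L`, `y ≠ 0`.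
If the segment `[0, x|_L]` meets the translate `y + [0, z|_L]` and also meets the reflected
translate `-y + [0, z|_L]`, then `0` must lie on one of the two translated segments (i.e. `0`
lies on both the base segment and a translate); generically the two intersection events are
mutually exclusive. -/
theorem segment_translate_reflect_not_both {d : ℕ}
    (L : Submodule ℝ (EuclideanSpace ℝ (Fin d)))
    (hL : Module.finrank ℝ L = 2)
    (x z : EuclideanSpace ℝ (Fin d)) (y : EuclideanSpace ℝ (Fin d))
    (hyL : y ∈ L) (hy : y ≠ 0)
    (h₁ : (segment ℝ 0 (↑(L.orthogonalProjection x)) ∩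
        ((y + ·) '' segment ℝ 0 (↑(L.orthogonalProjection z)))).Nonempty)
    (h₂ : (segment ℝ 0 (↑(L.orthogonalProjection x)) ∩
        ((-y + ·) '' segment ℝ 0 (↑(L.orthogonalProjection z)))).Nonempty) :
    (0 : EuclideanSpace ℝ (Fin d)) ∈ (y + ·) '' segment ℝ 0 (↑(L.orthogonalProjection z)) ∨
    (0 : EuclideanSpace ℝ (Fin d)) ∈ (-y + ·) '' segment ℝ 0 (↑(L.orthogonalProjection z)) := by
  set px : EuclideanSpace ℝ (Fin d) := ↑(L.orthogonalProjection x)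
  set pz : EuclideanSpace ℝ (Fin d) := ↑(L.orthogonalProjection z)
  obtain ⟨p, hpx, q, hq, hpq⟩ := h₁
  obtain ⟨p', hpx', q', hq', hpq'⟩ := h₂
  obtain ⟨s, hs0, hs1, rfl⟩ := mem_seg_iff hpx
  obtain ⟨s', hs0', hs1', rfl⟩ := mem_seg_iff hpx'
  obtain ⟨t, ht0, ht1, rfl⟩ := mem_seg_iff hq
  obtain ⟨t', ht0', ht1', rfl⟩ := mem_seg_iff hq'
  have e1 : y = s • px - t • pz := by
    rw [eq_sub_iff_add_eq]; linear_combination (norm := module) hpq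
  have e2 : -y = s' • px - t' • pz := by
    rw [eq_sub_iff_add_eq]; linear_combination (norm := module) hpq'
  have eadd : (s + s') • px = (t + t') • pz := by
    have h0 : (s • px - t • pz) + (s' • px - t' • pz) = 0 := by
      rw [← e1, ← e2]; simp
    linear_combination (norm := module) h0
  rcases eq_or_lt_of_le (by positivity : (0:ℝ) ≤ s + s') with hss | hss
  · -- s = s' = 0, so y = -t•pz
    have hs : s = 0 := by linarith
    have hyt : y = -(t • pz) := by rw [e1, hs]; module
    left
    exact ⟨t • pz, smul_mem_seg ht0 ht1 pz, by simp [hyt]⟩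
  · by_cases hpz : pz = 0
    · exfalso
      apply hy
      have hpx0 : px = 0 := by
        have : (s + s') • px = 0 := by rw [eadd, hpz, smul_zero]
        exact (smul_eq_zero.mp this).resolve_left (by positivity)
      rw [e1, hpx0, hpz, smul_zero, smul_zero, sub_zero]
    · set c : ℝ := (t + t') / (s + s') with hc
      have hc0 : 0 ≤ c := by positivity
      have hpxc : px = c • pz := by
        apply smul_right_injective _ hss.ne'
        show (s + s') • px = (s + s') • (c • pz)
        rw [eadd, smul_smul]
        congr 1
        rw [hc]
        field_simp
      have e1' : y = (s * c - t) • pz := by rw [e1, hpxc]; module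
      have e2' : -y = (s' * c - t') • pz := by rw [e2, hpxc]; module
      set l : ℝ := s * c - t with hl
      have hlt : l = t' - s' * c := by
        have h0 : (l + (s' * c - t')) • pz = 0 := by
          rw [add_smul, ← e1', ← e2']; simp
        have := (smul_eq_zero.mp h0).resolve_right hpz
        linarith
      have hlge : -1 ≤ l := by
        have : 0 ≤ s * c := by positivity
        rw [hl]; linarith
      have hle : l ≤ 1 := by
        have : 0 ≤ s' * c := by positivity
        rw [hlt]; linarith
      rcases le_or_gt 0 l with h0l | h0l
      · right
        refine ⟨l • pz, smul_mem_seg h0l hle pz, ?_⟩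
        simp only
        rw [← e1']
        module
      · left
        refine ⟨(-l) • pz, smul_mem_seg (by linarith) (by linarith) pz, ?_⟩
        simp only
        have h3 : -y = (-l) • pz := by rw [e2', hlt]; module
        rw [← h3]; module
end

section
/- Let K ⊂ ℝ^d be a convex body and L a 2-dimensional linear subspace with orthogonal complement L^⊥. Then ∫_{δB_d × K × δB_d} 1([0,x]|_L ∩ (y + [0,z])|_L ≠ ∅) dz dy dx ≤ c_d · δ^{2d+2} · M_{d-2}(K), where M_{d-2}(K) = sup_{u ∈ L} vol_{d-2}((u + L^⊥) ∩ K) is the volume of the maximal (d−2)-dimensional section of K parallel to L^⊥, and c_d = ∫_{B_d × 2B_2 × B_d} 1([0, x|_L] ∩ (y + [0, z|_L]) ≠ ∅) dz dy dx. -/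
open Set MeasureTheory

/-- The constant `c_d` from the unit-scale integral. -/
noncomputable def crossingConst {d : ℕ} (L : Submodule ℝ (EuclideanSpace ℝ (Fin d))) : ENNReal :=
  volume {p : EuclideanSpace ℝ (Fin d) × ↥L × EuclideanSpace ℝ (Fin d) |
    ‖p.1‖ ≤ 1 ∧ ‖p.2.1‖ ≤ 2 ∧ ‖p.2.2‖ ≤ 1 ∧
    (segment ℝ 0 (↑(Submodule.orthogonalProjectionOnto L p.1)) ∩
      ((↑p.2.1 + ·) '' segment ℝ 0 (↑(Submodule.orthogonalProjectionOnto L p.2.2)))).Nonempty}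

/-- `J_L^{(1)}(K, δ)`: the volume of the set of triples
`(x, y, z) ∈ δB_d × K × δB_d` such that `[0,x]|_L` meets `(y + [0,z])|_L`. -/
noncomputable def Jone {d : ℕ} (L : Submodule ℝ (EuclideanSpace ℝ (Fin d)))
    (K : Set (EuclideanSpace ℝ (Fin d))) (δ : ℝ) : ENNReal :=
  volume {p : EuclideanSpace ℝ (Fin d) × EuclideanSpace ℝ (Fin d) × EuclideanSpace ℝ (Fin d) |
    ‖p.1‖ ≤ δ ∧ p.2.1 ∈ K ∧ ‖p.2.2‖ ≤ δ ∧
    (segment ℝ 0 (↑(Submodule.orthogonalProjectionOnto L p.1)) ∩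
      ((↑(Submodule.orthogonalProjectionOnto L p.2.1) + ·) ''
        segment ℝ 0 (↑(Submodule.orthogonalProjectionOnto L p.2.2)))).Nonempty}

/-- The `(d-2)`-volume of the section `(u + L^⊥) ∩ K`, computed in the orthogonal
complement `L^⊥`. -/
noncomputable def sectionVol {d : ℕ} (L : Submodule ℝ (EuclideanSpace ℝ (Fin d)))
    (K : Set (EuclideanSpace ℝ (Fin d))) (u : EuclideanSpace ℝ (Fin d)) : ENNReal :=
  volume {w : ↥Lᗮ | u + ↑w ∈ K}

open Pointwise

/-- The crossing predicate: the segment `[0,a]` meets `b + [0,c]`. -/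
def Cross {V : Type*} [AddCommGroup V] [Module ℝ V] (a b c : V) : Prop :=
  ∃ s ∈ Icc (0:ℝ) 1, ∃ t ∈ Icc (0:ℝ) 1, s • a = b + t • c

theorem cross_iff {V : Type*} [AddCommGroup V] [Module ℝ V] (a b c : V) :
    (segment ℝ 0 a ∩ ((b + ·) '' segment ℝ 0 c)).Nonempty ↔ Cross a b c := by
  constructor
  · rintro ⟨w, hw, hw2⟩
    rw [segment_eq_image] at hw
    obtain ⟨s, hs, rfl⟩ := hw
    obtain ⟨c', hc', h⟩ := hw2
    rw [segment_eq_image] at hc'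
    obtain ⟨t, ht, rfl⟩ := hc'
    exact ⟨s, hs, t, ht, by simpa using h.symm⟩
  · rintro ⟨s, hs, t, ht, h⟩
    refine ⟨s • a, ?_, t • c, ?_, by simpa using h.symm⟩
    · rw [segment_eq_image]; exact ⟨s, hs, by simp⟩
    · rw [segment_eq_image]; exact ⟨t, ht, by simp⟩

theorem Cross.smul {V : Type*} [AddCommGroup V] [Module ℝ V] {a b c : V} (r : ℝ)
    (h : Cross a b c) : Cross (r • a) (r • b) (r • c) := by
  obtain ⟨s, hs, t, ht, h⟩ := h
  exact ⟨s, hs, t, ht, by rw [smul_comm, h, smul_add, smul_comm t]⟩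

theorem Cross.norm_le {V : Type*} [NormedAddCommGroup V] [NormedSpace ℝ V] {a b c : V} {δ : ℝ}
    (h : Cross a b c) (ha : ‖a‖ ≤ δ) (hc : ‖c‖ ≤ δ) : ‖b‖ ≤ 2 * δ := by
  obtain ⟨s, hs, t, ht, h⟩ := h
  have hb : b = s • a - t • c := by rw [h]; abel
  calc ‖b‖ = ‖s • a - t • c‖ := by rw [hb]
    _ ≤ ‖s • a‖ + ‖t • c‖ := norm_sub_le _ _
    _ ≤ δ + δ := by
        gcongr
        · calc ‖s • a‖ = |s| * ‖a‖ := by rw [norm_smul]; rfl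
            _ ≤ 1 * δ := by
                apply mul_le_mul _ ha (norm_nonneg _) zero_le_one
                rw [abs_of_nonneg hs.1]; exact hs.2
            _ = δ := one_mul δ
        · calc ‖t • c‖ = |t| * ‖c‖ := by rw [norm_smul]; rfl
            _ ≤ 1 * δ := by
                apply mul_le_mul _ hc (norm_nonneg _) zero_le_one
                rw [abs_of_nonneg ht.1]; exact ht.2
            _ = δ := one_mul δ
    _ = 2 * δ := by ring

theorem isClosed_cross {V : Type*} [NormedAddCommGroup V] [NormedSpace ℝ V] :
    IsClosed {p : V × V × V | Cross p.1 p.2.1 p.2.2} := by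
  have key : {p : V × V × V | Cross p.1 p.2.1 p.2.2} =
      Prod.snd '' {q : (Icc (0:ℝ) 1 × Icc (0:ℝ) 1) × V × V × V |
        (q.1.1 : ℝ) • q.2.1 = q.2.2.1 + (q.1.2 : ℝ) • q.2.2.2} := by
    ext p
    constructor
    · rintro ⟨s, hs, t, ht, h⟩
      exact ⟨((⟨s, hs⟩, ⟨t, ht⟩), p), h, rfl⟩
    · rintro ⟨⟨⟨s, t⟩, q⟩, h, rfl⟩
      exact ⟨s, s.2, t, t.2, h⟩
  rw [key]
  haveI : CompactSpace (Icc (0:ℝ) 1 × Icc (0:ℝ) 1) := by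
    haveI : CompactSpace (Icc (0:ℝ) 1) := isCompact_iff_compactSpace.mp isCompact_Icc
    infer_instance
  apply isClosedMap_snd_of_compactSpace
  apply isClosed_eq
  · exact (continuous_subtype_val.comp (continuous_fst.fst)).smul
      (continuous_fst.comp continuous_snd)
  · exact ((continuous_fst.comp (continuous_snd.comp continuous_snd))).add
      ((continuous_subtype_val.comp (continuous_fst.snd)).smul
        (continuous_snd.comp (continuous_snd.comp continuous_snd)))

/-- An orthonormal basis of `ℝ^d` adapted to the splitting `L ⊕ L^⊥`. -/
noncomputable def splitBasis {d : ℕ} (L : Submodule ℝ (EuclideanSpace ℝ (Fin d))) :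
    OrthonormalBasis (Fin (Module.finrank ℝ ↥L) ⊕ Fin (Module.finrank ℝ ↥Lᗮ)) ℝ
      (EuclideanSpace ℝ (Fin d)) := by
  set b₁ := stdOrthonormalBasis ℝ ↥L with hb₁
  set b₂ := stdOrthonormalBasis ℝ ↥Lᗮ with hb₂
  set v : Fin (Module.finrank ℝ ↥L) ⊕ Fin (Module.finrank ℝ ↥Lᗮ) → EuclideanSpace ℝ (Fin d) :=
    Sum.elim (fun i => ↑(b₁ i)) (fun j => ↑(b₂ j)) with hv
  have hvon : Orthonormal ℝ v := by
    constructor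
    · rintro (i | j)
      · exact b₁.orthonormal.1 i
      · exact b₂.orthonormal.1 j
    · rintro (i | j) (i' | j') hne <;> simp only [hv, Sum.elim_inl, Sum.elim_inr]
      · exact b₁.orthonormal.2 (fun h => hne (by rw [h]))
      · exact Submodule.inner_right_of_mem_orthogonal (b₁ i).2 (b₂ j').2
      · exact Submodule.inner_left_of_mem_orthogonal (b₁ i').2 (b₂ j).2
      · exact b₂.orthonormal.2 (fun h => hne (by rw [h]))
  have hsp : ⊤ ≤ Submodule.span ℝ (Set.range v) := by
    rw [top_le_iff]
    have hr : Set.range v = ⇑L.subtype '' Set.range b₁ ∪ ⇑Lᗮ.subtype '' Set.range b₂ := by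
      rw [hv, Sum.elim_range]
      simp [← Set.range_comp, Function.comp_def, Submodule.subtype]
    rw [hr, Submodule.span_union, Submodule.span_image, Submodule.span_image, ← b₁.coe_toBasis,
      ← b₂.coe_toBasis, b₁.toBasis.span_eq, b₂.toBasis.span_eq, Submodule.map_top,
      Submodule.map_top, Submodule.range_subtype, Submodule.range_subtype]
    exact (Submodule.isCompl_orthogonal_of_hasOrthogonalProjection (K := L)).sup_eq_top
  exact (Module.Basis.mk hvon.linearIndependent hsp).toOrthonormalBasis (by rwa [Module.Basis.coe_mk])

theorem splitBasis_apply_inl {d : ℕ} (L : Submodule ℝ (EuclideanSpace ℝ (Fin d)))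
    (i : Fin (Module.finrank ℝ ↥L)) :
    splitBasis L (Sum.inl i) = ↑(stdOrthonormalBasis ℝ ↥L i) := by
  simp [splitBasis, Module.Basis.coe_mk]

theorem splitBasis_apply_inr {d : ℕ} (L : Submodule ℝ (EuclideanSpace ℝ (Fin d)))
    (j : Fin (Module.finrank ℝ ↥Lᗮ)) :
    splitBasis L (Sum.inr j) = ↑(stdOrthonormalBasis ℝ ↥Lᗮ j) := by
  simp [splitBasis, Module.Basis.coe_mk]

/-- Addition `L × L^⊥ → ℝ^d` is measure preserving. -/
theorem measurePreserving_add_sub {d : ℕ} (L : Submodule ℝ (EuclideanSpace ℝ (Fin d))) :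
    MeasurePreserving (fun p : ↥L × ↥Lᗮ => (↑p.1 + ↑p.2 : EuclideanSpace ℝ (Fin d)))
      volume volume := by
  set b₁ := stdOrthonormalBasis ℝ ↥L
  set b₂ := stdOrthonormalBasis ℝ ↥Lᗮ
  set b := splitBasis L
  have h1 := (b₁.measurePreserving_repr).prod (b₂.measurePreserving_repr)
  have h2 := (EuclideanSpace.volume_preserving_symm_measurableEquiv_toLp
      (Fin (Module.finrank ℝ ↥L))).prod
    (EuclideanSpace.volume_preserving_symm_measurableEquiv_toLp (Fin (Module.finrank ℝ ↥Lᗮ)))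
  have h3 := measurePreserving_sumPiEquivProdPi_symm
    (fun _ : Fin (Module.finrank ℝ ↥L) ⊕ Fin (Module.finrank ℝ ↥Lᗮ) => (volume : Measure ℝ))
  have h4 := (EuclideanSpace.volume_preserving_symm_measurableEquiv_toLp
    (Fin (Module.finrank ℝ ↥L) ⊕ Fin (Module.finrank ℝ ↥Lᗮ))).symm
  have h5 := b.measurePreserving_repr_symm
  have hcomp := h5.comp (h4.comp (h3.comp (h2.comp h1)))
  convert hcomp using 1
  · rfl
  swap
  · rfl
  funext p
  apply b.repr.injective
  simp only [Function.comp_apply, LinearIsometryEquiv.apply_symm_apply]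
  ext i
  rw [b.repr_apply_apply]
  cases i with
  | inl i =>
    have hbi : (b (Sum.inl i) : EuclideanSpace ℝ (Fin d)) = ↑(b₁ i) := splitBasis_apply_inl L i
    rw [hbi, inner_add_right,
      Submodule.inner_right_of_mem_orthogonal (b₁ i).2 p.2.2, add_zero]
    have hi : inner ℝ ((b₁ i : EuclideanSpace ℝ (Fin d))) (↑p.1 : EuclideanSpace ℝ (Fin d))
        = (inner ℝ (b₁ i) p.1 : ℝ) := rfl
    rw [hi, ← b₁.repr_apply_apply]
    rfl
  | inr j =>
    have hbj : (b (Sum.inr j) : EuclideanSpace ℝ (Fin d)) = ↑(b₂ j) := splitBasis_apply_inr L j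
    rw [hbj, inner_add_right,
      Submodule.inner_left_of_mem_orthogonal p.1.2 (b₂ j).2, zero_add]
    have hj : inner ℝ ((b₂ j : EuclideanSpace ℝ (Fin d))) (↑p.2 : EuclideanSpace ℝ (Fin d))
        = (inner ℝ (b₂ j) p.2 : ℝ) := rfl
    rw [hj, ← b₂.repr_apply_apply]
    rfl

set_option maxHeartbeats 2000000 in
set_option synthInstance.maxHeartbeats 1000000 in
/-- `J_L^{(1)}(K, δ) ≤ c_d · δ^{2d+2} · M_{d-2}(K)`, where `M_{d-2}(K)` is the volume of
the maximal `(d-2)`-dimensional section of `K` parallel to `L^⊥`. -/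
theorem Jone_le {d : ℕ} (L : Submodule ℝ (EuclideanSpace ℝ (Fin d)))
    (hL : Module.finrank ℝ L = 2)
    (K : Set (EuclideanSpace ℝ (Fin d))) (hKconv : Convex ℝ K) (hKcomp : IsCompact K)
    (hKint : (interior K).Nonempty) (δ : ℝ) (hδ : 0 < δ) :
    Jone L K δ ≤ crossingConst L * ENNReal.ofReal δ ^ (2 * d + 2) *
      ⨆ u : ↥L, sectionVol L K ↑u := by
  classical
  set M := ⨆ u : ↥L, sectionVol L K ↑u with hM
  set S : Set (EuclideanSpace ℝ (Fin d) × EuclideanSpace ℝ (Fin d) × EuclideanSpace ℝ (Fin d)) :=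
    {p | ‖p.1‖ ≤ δ ∧ p.2.1 ∈ K ∧ ‖p.2.2‖ ≤ δ ∧
      ((segment ℝ (0 : ↥L) (Submodule.orthogonalProjectionOnto L p.1) : Set ↥L) ∩
        ((Submodule.orthogonalProjectionOnto L p.2.1 + ·) ''
          (segment ℝ (0 : ↥L) (Submodule.orthogonalProjectionOnto L p.2.2)))).Nonempty} with hS
  set S₀ : Set (EuclideanSpace ℝ (Fin d) × ↥L × EuclideanSpace ℝ (Fin d)) :=
    {p | ‖p.1‖ ≤ 1 ∧ ‖p.2.1‖ ≤ 2 ∧ ‖p.2.2‖ ≤ 1 ∧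
      ((segment ℝ (0 : ↥L) (Submodule.orthogonalProjectionOnto L p.1) : Set ↥L) ∩
        ((p.2.1 + ·) '' (segment ℝ (0 : ↥L) (Submodule.orthogonalProjectionOnto L p.2.2)))).Nonempty} with hS₀
  have hJ : Jone L K δ = volume S := rfl
  have hcc : crossingConst L = volume S₀ := rfl
  -- continuity fact
  have hprojcont : Continuous fun x : EuclideanSpace ℝ (Fin d) => Submodule.orthogonalProjectionOnto L x :=
    (Submodule.orthogonalProjectionOnto L).continuous
  -- S is closed
  have hSclosed : IsClosed S := by
    have h1 : IsClosed {p : EuclideanSpace ℝ (Fin d) × EuclideanSpace ℝ (Fin d) ×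
        EuclideanSpace ℝ (Fin d) | ‖p.1‖ ≤ δ} :=
      isClosed_le continuous_fst.norm continuous_const
    have h2 : IsClosed {p : EuclideanSpace ℝ (Fin d) × EuclideanSpace ℝ (Fin d) ×
        EuclideanSpace ℝ (Fin d) | p.2.1 ∈ K} :=
      IsClosed.preimage (continuous_fst.comp continuous_snd) hKcomp.isClosed
    have h3 : IsClosed {p : EuclideanSpace ℝ (Fin d) × EuclideanSpace ℝ (Fin d) ×
        EuclideanSpace ℝ (Fin d) | ‖p.2.2‖ ≤ δ} :=
      isClosed_le (continuous_snd.comp continuous_snd).norm continuous_const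
    have h4 : IsClosed {p : EuclideanSpace ℝ (Fin d) × EuclideanSpace ℝ (Fin d) ×
        EuclideanSpace ℝ (Fin d) | Cross (Submodule.orthogonalProjectionOnto L p.1)
          (Submodule.orthogonalProjectionOnto L p.2.1) (Submodule.orthogonalProjectionOnto L p.2.2)} := by
      have hc : Continuous fun p : EuclideanSpace ℝ (Fin d) × EuclideanSpace ℝ (Fin d) ×
          EuclideanSpace ℝ (Fin d) =>
          ((Submodule.orthogonalProjectionOnto L p.1 : ↥L), (Submodule.orthogonalProjectionOnto L p.2.1 : ↥L),
            (Submodule.orthogonalProjectionOnto L p.2.2 : ↥L)) := by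
        refine Continuous.prodMk (hprojcont.comp continuous_fst) (Continuous.prodMk ?_ ?_)
        · exact hprojcont.comp (continuous_fst.comp continuous_snd)
        · exact hprojcont.comp (continuous_snd.comp continuous_snd)
      exact isClosed_cross.preimage hc
    have hseq : S = {p : EuclideanSpace ℝ (Fin d) × EuclideanSpace ℝ (Fin d) ×
        EuclideanSpace ℝ (Fin d) | ‖p.1‖ ≤ δ} ∩ {p | p.2.1 ∈ K} ∩ {p | ‖p.2.2‖ ≤ δ} ∩
        {p | Cross (Submodule.orthogonalProjectionOnto L p.1) (Submodule.orthogonalProjectionOnto L p.2.1)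
          (Submodule.orthogonalProjectionOnto L p.2.2)} := by
      ext p
      simp only [hS, mem_setOf_eq, mem_inter_iff, cross_iff]
      tauto
    rw [hseq]
    exact ((h1.inter h2).inter h3).inter h4
  -- the measure preserving reshuffling map
  set ψ : (EuclideanSpace ℝ (Fin d) × ↥L × EuclideanSpace ℝ (Fin d)) × ↥Lᗮ →
      EuclideanSpace ℝ (Fin d) × EuclideanSpace ℝ (Fin d) × EuclideanSpace ℝ (Fin d) :=
    fun q => (q.1.1, (↑q.1.2.1 + ↑q.2 : EuclideanSpace ℝ (Fin d)), q.1.2.2) with hψdef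
  haveI : SFinite (volume : Measure ↥L) := inferInstance
  haveI : SFinite (volume : Measure ↥Lᗮ) := inferInstance
  haveI : SFinite (volume : Measure (EuclideanSpace ℝ (Fin d))) := inferInstance
  haveI : SFinite (volume : Measure (↥L × EuclideanSpace ℝ (Fin d))) :=
    inferInstanceAs (SFinite ((volume : Measure ↥L).prod volume))
  haveI : SFinite (volume : Measure (EuclideanSpace ℝ (Fin d) × ↥Lᗮ)) :=
    inferInstanceAs (SFinite ((volume : Measure (EuclideanSpace ℝ (Fin d))).prod volume))
  haveI : SFinite (volume : Measure (↥Lᗮ × EuclideanSpace ℝ (Fin d))) :=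
    inferInstanceAs (SFinite ((volume : Measure ↥Lᗮ).prod volume))
  haveI : SFinite (volume : Measure (↥L × ↥Lᗮ)) :=
    inferInstanceAs (SFinite ((volume : Measure ↥L).prod volume))
  haveI : SFinite (volume : Measure ((↥L × EuclideanSpace ℝ (Fin d)) × ↥Lᗮ)) :=
    inferInstanceAs (SFinite ((volume : Measure (↥L × EuclideanSpace ℝ (Fin d))).prod volume))
  haveI : SFinite (volume : Measure (↥L × EuclideanSpace ℝ (Fin d) × ↥Lᗮ)) :=
    inferInstanceAs (SFinite ((volume : Measure ↥L).prod volume))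
  haveI : SFinite (volume : Measure (↥L × ↥Lᗮ × EuclideanSpace ℝ (Fin d))) :=
    inferInstanceAs (SFinite ((volume : Measure ↥L).prod volume))
  haveI : SFinite (volume : Measure ((↥L × ↥Lᗮ) × EuclideanSpace ℝ (Fin d))) :=
    inferInstanceAs (SFinite ((volume : Measure (↥L × ↥Lᗮ)).prod volume))
  haveI : Measure.IsAddHaarMeasure (volume : Measure (↥L × EuclideanSpace ℝ (Fin d))) :=
    inferInstanceAs (Measure.IsAddHaarMeasure ((volume : Measure ↥L).prod volume))
  haveI : Measure.IsAddHaarMeasure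
      (volume : Measure (EuclideanSpace ℝ (Fin d) × ↥L × EuclideanSpace ℝ (Fin d))) :=
    inferInstanceAs
      (Measure.IsAddHaarMeasure ((volume : Measure (EuclideanSpace ℝ (Fin d))).prod volume))
  haveI : BorelSpace (EuclideanSpace ℝ (Fin d) × ↥L × EuclideanSpace ℝ (Fin d)) :=
    inferInstance
  have hψ : MeasurePreserving ψ volume volume := by
    have g₁ : MeasurePreserving
        (MeasurableEquiv.prodAssoc :
          (EuclideanSpace ℝ (Fin d) × (↥L × EuclideanSpace ℝ (Fin d))) × ↥Lᗮ ≃ᵐ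
          EuclideanSpace ℝ (Fin d) × (↥L × EuclideanSpace ℝ (Fin d)) × ↥Lᗮ)
        volume volume := volume_preserving_prodAssoc
    have g₂ : MeasurePreserving
        (Prod.map (id : EuclideanSpace ℝ (Fin d) → EuclideanSpace ℝ (Fin d))
          (⇑(MeasurableEquiv.prodAssoc :
            (↥L × EuclideanSpace ℝ (Fin d)) × ↥Lᗮ ≃ᵐ ↥L × EuclideanSpace ℝ (Fin d) × ↥Lᗮ)))
        volume volume :=
      (MeasurePreserving.id volume).prod volume_preserving_prodAssoc
    have g₃ : MeasurePreserving
        (Prod.map (id : EuclideanSpace ℝ (Fin d) → EuclideanSpace ℝ (Fin d))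
          (Prod.map (id : ↥L → ↥L)
            (Prod.swap : EuclideanSpace ℝ (Fin d) × ↥Lᗮ → ↥Lᗮ × EuclideanSpace ℝ (Fin d))))
        volume volume :=
      (MeasurePreserving.id volume).prod ((MeasurePreserving.id volume).prod
        Measure.measurePreserving_swap)
    have g₄ : MeasurePreserving
        (Prod.map (id : EuclideanSpace ℝ (Fin d) → EuclideanSpace ℝ (Fin d))
          (⇑(MeasurableEquiv.prodAssoc.symm :
            ↥L × ↥Lᗮ × EuclideanSpace ℝ (Fin d) ≃ᵐ (↥L × ↥Lᗮ) × EuclideanSpace ℝ (Fin d))))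
        volume volume :=
      (MeasurePreserving.id volume).prod
        (volume_preserving_prodAssoc.symm MeasurableEquiv.prodAssoc)
    have g₅ : MeasurePreserving
        (Prod.map (id : EuclideanSpace ℝ (Fin d) → EuclideanSpace ℝ (Fin d))
          (Prod.map (fun p : ↥L × ↥Lᗮ => (↑p.1 + ↑p.2 : EuclideanSpace ℝ (Fin d)))
            (id : EuclideanSpace ℝ (Fin d) → EuclideanSpace ℝ (Fin d))))
        volume volume :=
      (MeasurePreserving.id volume).prod
        ((measurePreserving_add_sub L).prod (MeasurePreserving.id volume))
    have hcomp := g₅.comp (g₄.comp (g₃.comp (g₂.comp g₁)))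
    have : ψ = (Prod.map id (Prod.map (fun p : ↥L × ↥Lᗮ =>
          (↑p.1 + ↑p.2 : EuclideanSpace ℝ (Fin d))) id)) ∘
        (Prod.map id ⇑(MeasurableEquiv.prodAssoc.symm :
            ↥L × ↥Lᗮ × EuclideanSpace ℝ (Fin d) ≃ᵐ (↥L × ↥Lᗮ) × EuclideanSpace ℝ (Fin d))) ∘
        (Prod.map id (Prod.map id Prod.swap)) ∘
        (Prod.map id ⇑(MeasurableEquiv.prodAssoc :
            (↥L × EuclideanSpace ℝ (Fin d)) × ↥Lᗮ ≃ᵐ ↥L × EuclideanSpace ℝ (Fin d) × ↥Lᗮ)) ∘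
        ⇑(MeasurableEquiv.prodAssoc :
          (EuclideanSpace ℝ (Fin d) × (↥L × EuclideanSpace ℝ (Fin d))) × ↥Lᗮ ≃ᵐ
          EuclideanSpace ℝ (Fin d) × (↥L × EuclideanSpace ℝ (Fin d)) × ↥Lᗮ) := rfl
    rw [this]
    exact hcomp
  have hprojadd : ∀ (u : ↥L) (w : ↥Lᗮ),
      Submodule.orthogonalProjectionOnto L ((↑u : EuclideanSpace ℝ (Fin d)) + ↑w) = u := by
    intro u w
    rw [map_add, Submodule.orthogonalProjectionOnto_mem_subspace_eq_self,
      Submodule.orthogonalProjectionOnto_apply_of_mem_orthogonal w.2, add_zero]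
  set C : Set (EuclideanSpace ℝ (Fin d) × ↥L × EuclideanSpace ℝ (Fin d)) :=
    {p | ‖p.1‖ ≤ δ ∧ ‖p.2.2‖ ≤ δ ∧
      Cross (Submodule.orthogonalProjectionOnto L p.1) p.2.1 (Submodule.orthogonalProjectionOnto L p.2.2)} with hC
  have hT' : ψ ⁻¹' S = {q : (EuclideanSpace ℝ (Fin d) × ↥L × EuclideanSpace ℝ (Fin d)) × ↥Lᗮ |
      ((↑q.1.2.1 : EuclideanSpace ℝ (Fin d)) + ↑q.2 ∈ K) ∧ q.1 ∈ C} := by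
    ext q
    simp only [hψdef, hS, hC, mem_preimage, mem_setOf_eq, hprojadd, cross_iff]
    tauto
  have hCclosed : IsClosed C := by
    have h1 : IsClosed {p : EuclideanSpace ℝ (Fin d) × ↥L × EuclideanSpace ℝ (Fin d) |
        ‖p.1‖ ≤ δ} := isClosed_le continuous_fst.norm continuous_const
    have h3 : IsClosed {p : EuclideanSpace ℝ (Fin d) × ↥L × EuclideanSpace ℝ (Fin d) |
        ‖p.2.2‖ ≤ δ} := isClosed_le (continuous_snd.comp continuous_snd).norm continuous_const
    have h4 : IsClosed {p : EuclideanSpace ℝ (Fin d) × ↥L × EuclideanSpace ℝ (Fin d) |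
        Cross (Submodule.orthogonalProjectionOnto L p.1) p.2.1 (Submodule.orthogonalProjectionOnto L p.2.2)} := by
      have hc : Continuous fun p : EuclideanSpace ℝ (Fin d) × ↥L × EuclideanSpace ℝ (Fin d) =>
          ((Submodule.orthogonalProjectionOnto L p.1 : ↥L), (p.2.1 : ↥L),
            (Submodule.orthogonalProjectionOnto L p.2.2 : ↥L)) := by
        refine Continuous.prodMk (hprojcont.comp continuous_fst) (Continuous.prodMk ?_ ?_)
        · exact continuous_fst.comp continuous_snd
        · exact hprojcont.comp (continuous_snd.comp continuous_snd)
      exact isClosed_cross.preimage hc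
    have hceq : C = {p : EuclideanSpace ℝ (Fin d) × ↥L × EuclideanSpace ℝ (Fin d) |
        ‖p.1‖ ≤ δ} ∩ {p | ‖p.2.2‖ ≤ δ} ∩
        {p | Cross (Submodule.orthogonalProjectionOnto L p.1) p.2.1 (Submodule.orthogonalProjectionOnto L p.2.2)} := by
      ext p; simp only [hC, mem_setOf_eq, mem_inter_iff]; tauto
    rw [hceq]
    exact (h1.inter h3).inter h4
  -- norm of projection
  have hprojnorm : ∀ x : EuclideanSpace ℝ (Fin d), ‖Submodule.orthogonalProjectionOnto L x‖ ≤ ‖x‖ := by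
    intro x
    calc ‖Submodule.orthogonalProjectionOnto L x‖
        ≤ ‖Submodule.orthogonalProjectionOnto L‖ * ‖x‖ := (Submodule.orthogonalProjectionOnto L).le_opNorm x
      _ ≤ 1 * ‖x‖ := by gcongr; exact L.orthogonalProjectionOnto_norm_le
      _ = ‖x‖ := one_mul _
  -- C ⊆ δ • S₀
  have hsub : C ⊆ δ • S₀ := by
    intro p hp
    rw [Set.mem_smul_set_iff_inv_smul_mem₀ (ne_of_gt hδ)]
    obtain ⟨h1, h2, hcr⟩ := hp
    have hδinv : (0:ℝ) < δ⁻¹ := inv_pos.mpr hδ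
    refine ⟨?_, ?_, ?_, ?_⟩
    · show ‖δ⁻¹ • p.1‖ ≤ 1
      rw [norm_smul, Real.norm_eq_abs, abs_of_pos hδinv]
      calc δ⁻¹ * ‖p.1‖ ≤ δ⁻¹ * δ := by gcongr
        _ = 1 := inv_mul_cancel₀ (ne_of_gt hδ)
    · show ‖δ⁻¹ • p.2.1‖ ≤ 2
      have hb : ‖p.2.1‖ ≤ 2 * δ :=
        hcr.norm_le (le_trans (hprojnorm p.1) h1) (le_trans (hprojnorm p.2.2) h2)
      rw [norm_smul, Real.norm_eq_abs, abs_of_pos hδinv]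
      calc δ⁻¹ * ‖p.2.1‖ ≤ δ⁻¹ * (2 * δ) := by gcongr
        _ = 2 * (δ⁻¹ * δ) := by ring
        _ = 2 := by rw [inv_mul_cancel₀ (ne_of_gt hδ), mul_one]
    · show ‖δ⁻¹ • p.2.2‖ ≤ 1
      rw [norm_smul, Real.norm_eq_abs, abs_of_pos hδinv]
      calc δ⁻¹ * ‖p.2.2‖ ≤ δ⁻¹ * δ := by gcongr
        _ = 1 := inv_mul_cancel₀ (ne_of_gt hδ)
    · show ((segment ℝ (0 : ↥L)
          (Submodule.orthogonalProjectionOnto L ((δ⁻¹ • p : EuclideanSpace ℝ (Fin d) × ↥L ×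
            EuclideanSpace ℝ (Fin d)).1)) : Set ↥L) ∩
          (((δ⁻¹ • p : EuclideanSpace ℝ (Fin d) × ↥L × EuclideanSpace ℝ (Fin d)).2.1 + ·) ''
            (segment ℝ (0 : ↥L) (Submodule.orthogonalProjectionOnto L
              (δ⁻¹ • p : EuclideanSpace ℝ (Fin d) × ↥L ×
                EuclideanSpace ℝ (Fin d)).2.2)))).Nonempty
      rw [cross_iff]
      have e1 : (δ⁻¹ • p : EuclideanSpace ℝ (Fin d) × ↥L ×
          EuclideanSpace ℝ (Fin d)).1 = δ⁻¹ • p.1 := rfl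
      have e2 : (δ⁻¹ • p : EuclideanSpace ℝ (Fin d) × ↥L ×
          EuclideanSpace ℝ (Fin d)).2.1 = δ⁻¹ • p.2.1 := rfl
      have e3 : (δ⁻¹ • p : EuclideanSpace ℝ (Fin d) × ↥L ×
          EuclideanSpace ℝ (Fin d)).2.2 = δ⁻¹ • p.2.2 := rfl
      rw [e1, e2, e3, _root_.map_smul, _root_.map_smul]
      exact hcr.smul δ⁻¹
  -- finrank
  have hrank : Module.finrank ℝ (EuclideanSpace ℝ (Fin d) × ↥L × EuclideanSpace ℝ (Fin d))
      = 2 * d + 2 := by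
    rw [Module.finrank_prod, Module.finrank_prod, hL, finrank_euclideanSpace_fin]
    ring
  -- main computation
  rw [hJ, ← hψ.measure_preimage hSclosed.measurableSet.nullMeasurableSet, hT']
  have hT'meas : MeasurableSet {q : (EuclideanSpace ℝ (Fin d) × ↥L ×
      EuclideanSpace ℝ (Fin d)) × ↥Lᗮ |
      ((↑q.1.2.1 : EuclideanSpace ℝ (Fin d)) + ↑q.2 ∈ K) ∧ q.1 ∈ C} := by
    rw [← hT']
    exact hψ.measurable hSclosed.measurableSet
  rw [Measure.volume_eq_prod, Measure.prod_apply hT'meas]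
  have hpt : ∀ p : EuclideanSpace ℝ (Fin d) × ↥L × EuclideanSpace ℝ (Fin d),
      volume (Prod.mk p ⁻¹' {q : (EuclideanSpace ℝ (Fin d) × ↥L ×
        EuclideanSpace ℝ (Fin d)) × ↥Lᗮ |
        ((↑q.1.2.1 : EuclideanSpace ℝ (Fin d)) + ↑q.2 ∈ K) ∧ q.1 ∈ C}) =
      C.indicator (fun p => sectionVol L K ↑p.2.1) p := by
    intro p
    by_cases hp : p ∈ C
    · rw [indicator_of_mem hp]
      congr 1
      ext w
      simp [hp, sectionVol]
    · rw [indicator_of_notMem hp]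
      have he : (Prod.mk p ⁻¹' {q : (EuclideanSpace ℝ (Fin d) × ↥L ×
          EuclideanSpace ℝ (Fin d)) × ↥Lᗮ |
          ((↑q.1.2.1 : EuclideanSpace ℝ (Fin d)) + ↑q.2 ∈ K) ∧ q.1 ∈ C}) = (∅ : Set ↥Lᗮ) := by
        ext w; simp [hp]
      rw [he]
      exact measure_empty
  calc ∫⁻ p, volume (Prod.mk p ⁻¹' {q : (EuclideanSpace ℝ (Fin d) × ↥L ×
        EuclideanSpace ℝ (Fin d)) × ↥Lᗮ |
        ((↑q.1.2.1 : EuclideanSpace ℝ (Fin d)) + ↑q.2 ∈ K) ∧ q.1 ∈ C}) =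
      ∫⁻ p, C.indicator (fun p => sectionVol L K ↑p.2.1) p := lintegral_congr hpt
    _ ≤ ∫⁻ p, C.indicator (fun _ => M) p := by
        refine lintegral_mono fun p => ?_
        by_cases hp : p ∈ C
        · rw [indicator_of_mem hp, indicator_of_mem hp, hM]
          exact le_iSup (fun u : ↥L => sectionVol L K ↑u) p.2.1
        · rw [indicator_of_notMem hp, indicator_of_notMem hp]
    _ = M * volume C := lintegral_indicator_const hCclosed.measurableSet M
    _ ≤ M * volume (δ • S₀) := mul_le_mul_right (measure_mono hsub) M
    _ = M * (ENNReal.ofReal (|δ ^ (2 * d + 2)|) * volume S₀) := by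
        rw [Measure.addHaar_smul, hrank]
    _ = crossingConst L * ENNReal.ofReal δ ^ (2 * d + 2) * M := by
        rw [abs_of_pos (pow_pos hδ _), ENNReal.ofReal_pow hδ.le, hcc]
        ring
end
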